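/- For every type A and all functions f, g : A → 𝟛 into Kleene's three-valued chain: ⨅ x, ((U ∧ f x) ∨ g x) = (U ∧ ⨅ x, (f x ∨ g x)) ∨ (⨅ x, g x). -/

import Mathlib

/-- Kleene's strong three-valued logic: the three-element chain F < U < T. -/
inductive K3 : Type
  | F | U | T
deriving DecidableEq

instance K3.instFintype : Fintype K3 where
  elems := {K3.F, K3.U, K3.T}
  complete x := by cases x <;> simp

namespace K3

/-- Rank of a truth value in the chain F < U < T. -/
def toFin : K3 → Fin 3
  | F => 0
  | U => 1
  | T => 2

instance : LinearOrder K3 := LinearOrder.lift' toFin (by decide)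

/-- Kleene negation: swaps T and F, fixes U. -/
def neg : K3 → K3
  | F => T
  | U => U
  | T => F

/-- A truth value is well-defined if it is F or T. -/
def WellDefined (v : K3) : Prop := v = F ∨ v = T

end K3


instance : BoundedOrder K3 where
  top := K3.T
  bot := K3.F
  le_top x := by cases x <;> decide
  bot_le x := by cases x <;> decide

noncomputable instance : CompleteLinearOrder K3 :=
  Fintype.toCompleteLinearOrder K3

/-- `⨅ x, ((U ∧ f x) ∨ g x) = (U ∧ ⨅ x, (f x ∨ g x)) ∨ (⨅ x, g x)` where the universal
quantifier is the infimum in the complete lattice 𝟛. -/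
theorem kleene_forall_undef_elim {A : Type*} (f g : A → K3) :
    (⨅ x, ((K3.U ⊓ f x) ⊔ g x)) = (K3.U ⊓ ⨅ x, (f x ⊔ g x)) ⊔ (⨅ x, g x) := by
  have h1 : ∀ x : A, (K3.U ⊓ f x) ⊔ g x = (K3.U ⊔ g x) ⊓ (f x ⊔ g x) := fun x =>
    sup_inf_right _ _ _
  calc (⨅ x, ((K3.U ⊓ f x) ⊔ g x))
      = ⨅ x, (K3.U ⊔ g x) ⊓ (f x ⊔ g x) := by simp_rw [h1]
    _ = (⨅ x, (K3.U ⊔ g x)) ⊓ (⨅ x, (f x ⊔ g x)) := iInf_inf_eq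
    _ = (K3.U ⊔ ⨅ x, g x) ⊓ (⨅ x, (f x ⊔ g x)) := by rw [sup_iInf_eq]
    _ = ((⨅ x, g x) ⊔ K3.U) ⊓ ((⨅ x, g x) ⊔ ⨅ x, (f x ⊔ g x)) := by
        rw [sup_comm, sup_of_le_right (iInf_mono fun x => le_sup_right)]
    _ = (⨅ x, g x) ⊔ (K3.U ⊓ ⨅ x, (f x ⊔ g x)) := (sup_inf_left _ _ _).symm
    _ = (K3.U ⊓ ⨅ x, (f x ⊔ g x)) ⊔ (⨅ x, g x) := sup_comm _ _
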